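/- arXiv:2003.02677 — 3 statements merged into one kernel-verified Lean document; each statement's English description precedes it below -/
import Mathlib

section
/- Let 0 < α < 1, β > 0 and 1 ≤ s < t. Then (1/Γ(1-α)) · (1/Γ(β)) · ∫_s^t (ln(t/r))^{-α} (ln(r/s))^{β-1} dr/r = (ln t - ln s)^{β-α} / Γ(β-α+1). -/
open Real MeasureTheory intervalIntegral

lemma real_beta_identity {u v : ℝ} (hu : 0 < u) (hv : 0 < v) :
    Real.Gamma u * Real.Gamma v =
      Real.Gamma (u + v) * ∫ x in (0:ℝ)..1, x ^ (u - 1) * (1 - x) ^ (v - 1) := by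
  have h := Complex.Gamma_mul_Gamma_eq_betaIntegral (s := (u:ℂ)) (t := (v:ℂ))
    (by simpa using hu) (by simpa using hv)
  have hbeta : Complex.betaIntegral (u:ℂ) (v:ℂ) =
      ((∫ x in (0:ℝ)..1, x ^ (u - 1) * (1 - x) ^ (v - 1) : ℝ) : ℂ) := by
    rw [Complex.betaIntegral, ← intervalIntegral.integral_ofReal]
    refine intervalIntegral.integral_congr fun x hx => ?_
    rw [Set.uIcc_of_le (by norm_num : (0:ℝ) ≤ 1)] at hx
    have hx0 : (0:ℝ) ≤ x := hx.1
    have hx1 : (0:ℝ) ≤ 1 - x := by linarith [hx.2]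
    rw [Complex.ofReal_mul, Complex.ofReal_cpow hx0, Complex.ofReal_cpow hx1]
    push_cast
    ring
  rw [hbeta, ← Complex.ofReal_add u v, Complex.Gamma_ofReal, Complex.Gamma_ofReal,
    Complex.Gamma_ofReal, ← Complex.ofReal_mul, ← Complex.ofReal_mul] at h
  exact_mod_cast h

/-- **A fractional-integral identity with logarithms.** For `0 < α < 1`, `β > 0` and
`1 ≤ s < t`,
`(1/Γ(1-α))·(1/Γ(β))·∫_s^t (ln(t/r))^(-α) (ln(r/s))^(β-1) dr/r
  = (ln t - ln s)^(β-α) / Γ(β-α+1)`. -/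
theorem hadamard_integral_identity (α β s t : ℝ) (hα0 : 0 < α) (hα1 : α < 1) (hβ : 0 < β)
    (hs : 1 ≤ s) (hst : s < t) :
    (Real.Gamma (1 - α))⁻¹ * (Real.Gamma β)⁻¹ *
        ∫ r in s..t, Real.log (t / r) ^ (-α) * Real.log (r / s) ^ (β - 1) / r
      = (Real.log t - Real.log s) ^ (β - α) / Real.Gamma (β - α + 1) := by
  have hs0 : 0 < s := lt_of_lt_of_le one_pos hs
  have ht0 : 0 < t := hs0.trans hst
  set A := Real.log s with hA
  set B := Real.log t with hB
  have hAB : A < B := Real.log_lt_log hs0 hst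
  set c := B - A with hcdef
  have hc : 0 < c := sub_pos.mpr hAB
  -- Step 1: substitution r = exp u
  have himg : Real.exp '' Set.Ioc A B = Set.Ioc s t := by
    ext r
    constructor
    · rintro ⟨u, ⟨h1, h2⟩, rfl⟩
      refine ⟨?_, ?_⟩
      · rw [← Real.exp_log hs0]; exact Real.exp_lt_exp.mpr h1
      · rw [← Real.exp_log ht0]; exact Real.exp_le_exp.mpr h2
    · rintro ⟨h1, h2⟩
      have hr0 : 0 < r := hs0.trans h1
      exact ⟨Real.log r, ⟨Real.log_lt_log hs0 h1, Real.log_le_log hr0 h2⟩,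
        Real.exp_log hr0⟩
  have hsub : (∫ r in s..t, Real.log (t / r) ^ (-α) * Real.log (r / s) ^ (β - 1) / r)
      = ∫ u in A..B, (B - u) ^ (-α) * (u - A) ^ (β - 1) := by
    rw [intervalIntegral.integral_of_le hst.le, intervalIntegral.integral_of_le hAB.le,
      ← himg]
    rw [integral_image_eq_integral_abs_deriv_smul measurableSet_Ioc
      (fun x _ => (Real.hasDerivAt_exp x).hasDerivWithinAt) Real.exp_injective.injOn
      (fun r => Real.log (t / r) ^ (-α) * Real.log (r / s) ^ (β - 1) / r)]
    have key : ∀ u : ℝ, |Real.exp u| •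
        (Real.log (t / Real.exp u) ^ (-α) * Real.log (Real.exp u / s) ^ (β - 1) / Real.exp u)
        = (B - u) ^ (-α) * (u - A) ^ (β - 1) := by
      intro u
      have he : (0:ℝ) < Real.exp u := Real.exp_pos u
      rw [abs_of_pos he, Real.log_div (ne_of_gt ht0) (ne_of_gt he),
        Real.log_div (ne_of_gt he) (ne_of_gt hs0), Real.log_exp, smul_eq_mul]
      field_simp
      rfl
    simp only [key]
  -- Step 2: affine substitution u = c * x + A
  have haff : (∫ u in A..B, (B - u) ^ (-α) * (u - A) ^ (β - 1))
      = c ^ (β - α) * ∫ x in (0:ℝ)..1, x ^ (β - 1) * (1 - x) ^ (-α) := by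
    have h1 := intervalIntegral.smul_integral_comp_mul_add
      (a := (0:ℝ)) (b := 1) (fun u => (B - u) ^ (-α) * (u - A) ^ (β - 1)) c A
    rw [mul_zero, zero_add, mul_one] at h1
    have hcB : c + A = B := by rw [hcdef]; ring
    rw [hcB] at h1
    rw [← h1, smul_eq_mul]
    have h2 : (∫ x in (0:ℝ)..1, (B - (c * x + A)) ^ (-α) * (c * x + A - A) ^ (β - 1))
        = c ^ (-α) * c ^ (β - 1) * ∫ x in (0:ℝ)..1, x ^ (β - 1) * (1 - x) ^ (-α) := by
      rw [← intervalIntegral.integral_const_mul]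
      refine intervalIntegral.integral_congr fun x hx => ?_
      rw [Set.uIcc_of_le (by norm_num : (0:ℝ) ≤ 1)] at hx
      have hx0 : (0:ℝ) ≤ x := hx.1
      have hx1 : (0:ℝ) ≤ 1 - x := by linarith [hx.2]
      have e1 : B - (c * x + A) = c * (1 - x) := by rw [hcdef]; ring
      have e2 : c * x + A - A = c * x := by ring
      rw [e1, e2, Real.mul_rpow hc.le hx1, Real.mul_rpow hc.le hx0]
      ring
    rw [h2, show β - α = 1 + -α + (β - 1) by ring, Real.rpow_add hc, Real.rpow_add hc,
      Real.rpow_one]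
    ring
  -- Step 3: Beta identity
  have hbeta := real_beta_identity hβ (by linarith : (0:ℝ) < 1 - α)
  rw [show β + (1 - α) = β - α + 1 by ring, show (1:ℝ) - α - 1 = -α by ring] at hbeta
  have hΓ1 : Real.Gamma (1 - α) ≠ 0 := (Real.Gamma_pos_of_pos (by linarith)).ne'
  have hΓ2 : Real.Gamma β ≠ 0 := (Real.Gamma_pos_of_pos hβ).ne'
  have hΓ3 : Real.Gamma (β - α + 1) ≠ 0 :=
    (Real.Gamma_pos_of_pos (by linarith)).ne'
  have hI : (∫ x in (0:ℝ)..1, x ^ (β - 1) * (1 - x) ^ (-α))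
      = Real.Gamma β * Real.Gamma (1 - α) / Real.Gamma (β - α + 1) := by
    field_simp
    linarith [hbeta]
  rw [hsub, haff, hI]
  field_simp
end

section
/- Let A1 be an n×n real matrix, let A0 = 0 (the zero matrix), let h > 1, 0 < α < 1, β > 0, s ≥ 1, and t > s h^k for an integer k ≥ 0. Then Y_{α,β,k}(t, s h^k) = A1^k (ln(t/(s h^k)))^{kα + β - 1} / Γ(kα + β). -/
open Real MeasureTheory intervalIntegral Filter

attribute [local instance] Matrix.linftyOpNormedAddCommGroup Matrix.linftyOpNormedRing
  Matrix.linftyOpNormedAlgebra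

/-- Mittag-Leffler type matrix function `E_{α,β}(A; z) = ∑_{k=0}^∞ A^k z^{αk}/Γ(kα+β)`. -/
noncomputable def mlE {n : ℕ} (A : Matrix (Fin n) (Fin n) ℝ) (α β z : ℝ) :
    Matrix (Fin n) (Fin n) ℝ :=
  ∑' k : ℕ, (z ^ (α * k) / Real.Gamma (k * α + β)) • A ^ k

/-- The matrices `Y_{α,β,k}(t, u)` (with `u = s·h^k`), defined recursively by
`Y_{α,β,0}(t,u) = (ln(t/u))^(β-1) E_{α,β}(A0; ln(t/u))` and
`Y_{α,β,k}(t,u) = ∫_u^t e_{α,α}(A0; ln(t/r)) A1 Y_{α,β,k-1}(r/h, u/h) dr/r`, where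
`e_{α,α}(A; z) = z^(α-1) E_{α,α}(A; z)`. -/
noncomputable def Ymat {n : ℕ} (A0 A1 : Matrix (Fin n) (Fin n) ℝ) (h α β : ℝ) :
    ℕ → ℝ → ℝ → Matrix (Fin n) (Fin n) ℝ
  | 0 => fun t u => Real.log (t / u) ^ (β - 1) • mlE A0 α β (Real.log (t / u))
  | (k + 1) => fun t u =>
      ∫ r in u..t, r⁻¹ •
        (Real.log (t / r) ^ (α - 1) • mlE A0 α α (Real.log (t / r))
          * (A1 * Ymat A0 A1 h α β k (r / h) (u / h)))

/-- Delayed Mittag-Leffler type matrix function with logarithm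
`Y_{h,α,β}^{A0,A1}(t,s)`: it is `0` for `t < s`, the identity for `t = s`, and equals
`∑_{j=0}^k Y_{α,β,j}(t, s h^j)` for `s h^k < t ≤ s h^{k+1}` (note that in this case
`⌈ln(t/s)/ln h⌉ = k + 1`). -/
noncomputable def Ydel {n : ℕ} (A0 A1 : Matrix (Fin n) (Fin n) ℝ) (h α β : ℝ) (t s : ℝ) :
    Matrix (Fin n) (Fin n) ℝ :=
  if t < s then 0
  else if t = s then 1
  else ∑ j ∈ Finset.range ⌈Real.log (t / s) / Real.log h⌉₊, Ymat A0 A1 h α β j t (s * h ^ j)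


lemma mlE_zero {n : ℕ} (α β z : ℝ) :
    mlE (0 : Matrix (Fin n) (Fin n) ℝ) α β z = (1 / Real.Gamma β) • (1 : Matrix (Fin n) (Fin n) ℝ) := by
  rw [mlE, tsum_eq_single 0]
  · simp
  · intro k hk
    simp [zero_pow hk]

lemma real_beta_scaled {a b L : ℝ} (ha : 0 < a) (hb : 0 < b) (hL : 0 < L) :
    ∫ x in (0:ℝ)..L, x ^ (b - 1) * (L - x) ^ (a - 1)
      = L ^ (a + b - 1) * (Real.Gamma a * Real.Gamma b / Real.Gamma (a + b)) := by
  have hGa : (0:ℝ) < Real.Gamma (a + b) := Real.Gamma_pos_of_pos (by linarith)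
  have hba : ((b:ℂ) + a) = ((b + a : ℝ) : ℂ) := by push_cast; ring
  have hGC : Complex.Gamma ((b:ℂ) + a) ≠ 0 := by
    rw [hba, Complex.Gamma_ofReal]
    exact_mod_cast (by rw [add_comm]; exact hGa.ne')
  have hG := Complex.Gamma_mul_Gamma_eq_betaIntegral (s := (b:ℂ)) (t := (a:ℂ))
    (by simpa using hb) (by simpa using ha)
  have hbeta : Complex.betaIntegral b a
      = ((Real.Gamma b * Real.Gamma a / Real.Gamma (b + a) : ℝ) : ℂ) := by
    have h2 : Complex.betaIntegral b a
        = Complex.Gamma b * Complex.Gamma a / Complex.Gamma ((b:ℂ)+a) :=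
      (eq_div_iff hGC).mpr (by rw [mul_comm]; exact hG.symm)
    rw [h2, hba, Complex.Gamma_ofReal, Complex.Gamma_ofReal, Complex.Gamma_ofReal]
    push_cast; ring
  have key : ((∫ x in (0:ℝ)..L, x ^ (b-1) * (L-x) ^ (a-1) : ℝ) : ℂ)
      = (L:ℂ) ^ ((b:ℂ) + (a:ℂ) - 1) * Complex.betaIntegral b a := by
    rw [← Complex.betaIntegral_scaled b a hL, ← intervalIntegral.integral_ofReal]
    refine intervalIntegral.integral_congr fun x hx => ?_
    rw [Set.uIcc_of_le hL.le] at hx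
    rw [Complex.ofReal_mul, Complex.ofReal_cpow hx.1, Complex.ofReal_cpow (by linarith [hx.2] : (0:ℝ) ≤ L - x)]
    push_cast; ring
  rw [hbeta, show (L:ℂ) ^ ((b:ℂ) + (a:ℂ) - 1) = ((L ^ (b + a - 1) : ℝ) : ℂ) by
      rw [Complex.ofReal_cpow hL.le]; push_cast; ring] at key
  rw [← Complex.ofReal_mul] at key
  have := Complex.ofReal_inj.mp key
  rw [this]; rw [show a + b - 1 = b + a - 1 by ring, show a + b = b + a by ring]; ring

lemma log_beta_integral {α γ u t : ℝ} (hα : 0 < α) (hγ : 0 < γ) (hu : 0 < u) (hut : u < t) :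
    ∫ r in u..t, Real.log (t / r) ^ (α - 1) * Real.log (r / u) ^ (γ - 1) / r
      = Real.log (t / u) ^ (α + γ - 1) * (Real.Gamma α * Real.Gamma γ / Real.Gamma (α + γ)) := by
  have ht0 : 0 < t := hu.trans hut
  set L := Real.log (t / u) with hLdef
  have hL : 0 < L := Real.log_pos ((one_lt_div hu).mpr hut)
  have himg : (fun x => u * Real.exp x) '' Set.Ioo 0 L = Set.Ioo u t := by
    ext y
    simp only [Set.mem_image, Set.mem_Ioo]
    constructor
    · rintro ⟨x, ⟨hx0, hxL⟩, rfl⟩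
      have h1 : (1:ℝ) < Real.exp x := by
        rw [← Real.exp_zero]; exact Real.exp_lt_exp.mpr hx0
      have h2 : Real.exp x < t / u := by
        rw [← Real.exp_log (div_pos ht0 hu)]; exact Real.exp_lt_exp.mpr hxL
      constructor
      · nlinarith
      · calc u * Real.exp x < u * (t / u) := by exact (mul_lt_mul_iff_right₀ hu).mpr h2
          _ = t := by field_simp
    · rintro ⟨hy1, hy2⟩
      have hy0 : 0 < y := hu.trans hy1
      refine ⟨Real.log (y / u), ⟨Real.log_pos ((one_lt_div hu).mpr hy1),
        Real.log_lt_log (div_pos hy0 hu) ?_⟩, ?_⟩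
      · exact div_lt_div_of_pos_right hy2 hu
      · rw [Real.exp_log (div_pos hy0 hu)]; field_simp
  have hinj : Set.InjOn (fun x => u * Real.exp x) (Set.Ioo 0 L) := fun x _ y _ hxy =>
    Real.exp_injective (mul_left_cancel₀ hu.ne' hxy)
  have sub := integral_image_eq_integral_abs_deriv_smul measurableSet_Ioo
    (fun x _ => ((Real.hasDerivAt_exp x).const_mul u).hasDerivWithinAt)
    hinj (fun r => Real.log (t / r) ^ (α - 1) * Real.log (r / u) ^ (γ - 1) / r)
  rw [himg] at sub
  have hfun : ∀ x : ℝ, |u * Real.exp x| •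
      (fun r => Real.log (t / r) ^ (α - 1) * Real.log (r / u) ^ (γ - 1) / r) (u * Real.exp x)
      = (L - x) ^ (α - 1) * x ^ (γ - 1) := by
    intro x
    have he : (0:ℝ) < Real.exp x := Real.exp_pos x
    have hue : (0:ℝ) < u * Real.exp x := mul_pos hu he
    have h1 : Real.log (t / (u * Real.exp x)) = L - x := by
      rw [Real.log_div ht0.ne' hue.ne', Real.log_mul hu.ne' he.ne', Real.log_exp, hLdef,
        Real.log_div ht0.ne' hu.ne']
      ring
    have h2 : Real.log (u * Real.exp x / u) = x := by
      rw [mul_comm, mul_div_assoc, div_self hu.ne', mul_one, Real.log_exp]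
    simp only [h1, h2, smul_eq_mul, abs_of_pos hue]
    field_simp
  simp only [hfun] at sub
  rw [intervalIntegral.integral_of_le hut.le, integral_Ioc_eq_integral_Ioo, sub,
    ← integral_Ioc_eq_integral_Ioo, ← intervalIntegral.integral_of_le hL.le]
  rw [show (∫ x in (0:ℝ)..L, (L - x) ^ (α - 1) * x ^ (γ - 1))
      = ∫ x in (0:ℝ)..L, x ^ (γ - 1) * (L - x) ^ (α - 1) by
    congr 1; ext x; ring]
  exact real_beta_scaled hα hγ hL

/-- **Closed form of `Y_{α,β,k}` when `A0 = 0`.** For `h > 1`, `0 < α < 1`, `β > 0`,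
`s ≥ 1` and `t > s h^k`,
`Y_{α,β,k}(t, s h^k) = A1^k (ln(t/(s h^k)))^{kα+β-1}/Γ(kα+β)`. -/
theorem Ymat_eq_of_A0_zero (n : ℕ) (A1 : Matrix (Fin n) (Fin n) ℝ) (h α β s t : ℝ) (k : ℕ)
    (hh : 1 < h) (hα0 : 0 < α) (hα1 : α < 1) (hβ : 0 < β) (hs : 1 ≤ s)
    (ht : s * h ^ k < t) :
    Ymat (0 : Matrix (Fin n) (Fin n) ℝ) A1 h α β k t (s * h ^ k)
      = (Real.log (t / (s * h ^ k)) ^ (k * α + β - 1) / Real.Gamma (k * α + β)) • A1 ^ k := by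
  induction k generalizing t with
  | zero =>
    simp only [pow_zero, mul_one, Ymat, mlE_zero, smul_smul, Nat.cast_zero, zero_mul, zero_add,
      pow_zero]
    congr 1
    ring
  | succ k ih =>
    have hh0 : (0:ℝ) < h := lt_trans one_pos hh
    set u : ℝ := s * h ^ (k + 1) with hudef
    have hu0 : (0:ℝ) < u := by positivity
    have hu' : u / h = s * h ^ k := by
      rw [hudef, pow_succ]; field_simp
    set γ : ℝ := (k : ℝ) * α + β with hγdef
    have hγ : 0 < γ := by positivity
    have hGα : (0:ℝ) < Real.Gamma α := Real.Gamma_pos_of_pos hα0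
    have hGγ : (0:ℝ) < Real.Gamma γ := Real.Gamma_pos_of_pos hγ
    have hcong : ∀ r ∈ Set.Ioc u t,
        r⁻¹ • (Real.log (t / r) ^ (α - 1) •
            mlE (0 : Matrix (Fin n) (Fin n) ℝ) α α (Real.log (t / r))
          * (A1 * Ymat (0 : Matrix (Fin n) (Fin n) ℝ) A1 h α β k (r / h) (u / h)))
        = (Real.log (t / r) ^ (α - 1) * Real.log (r / u) ^ (γ - 1) / r
            / (Real.Gamma α * Real.Gamma γ)) • A1 ^ (k + 1) := by
      intro r hr
      have hr0 : 0 < r := lt_trans hu0 hr.1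
      have hrk : s * h ^ k < r / h := by
        rw [← hu']
        exact div_lt_div_of_pos_right hr.1 hh0
      rw [hu', ih (r / h) hrk, mlE_zero]
      have h2 : r / h / (s * h ^ k) = r / u := by
        rw [hudef, pow_succ, div_div]; ring_nf
      rw [h2]
      simp only [Matrix.mul_smul, Matrix.smul_mul, smul_smul, Matrix.one_mul, ← pow_succ']
      congr 1
      field_simp
    have heq : Ymat (0 : Matrix (Fin n) (Fin n) ℝ) A1 h α β (k + 1) t u
        = ∫ r in u..t, (Real.log (t / r) ^ (α - 1) * Real.log (r / u) ^ (γ - 1) / r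
            / (Real.Gamma α * Real.Gamma γ)) • A1 ^ (k + 1) := by
      rw [show Ymat (0 : Matrix (Fin n) (Fin n) ℝ) A1 h α β (k + 1) t u
          = ∫ r in u..t, r⁻¹ • (Real.log (t / r) ^ (α - 1) •
              mlE (0 : Matrix (Fin n) (Fin n) ℝ) α α (Real.log (t / r))
            * (A1 * Ymat (0 : Matrix (Fin n) (Fin n) ℝ) A1 h α β k (r / h) (u / h))) from rfl]
      refine intervalIntegral.integral_congr_ae ?_
      filter_upwards with r hr
      rw [Set.uIoc_of_le ht.le] at hr
      exact hcong r hr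
    rw [heq, intervalIntegral.integral_smul_const]
    simp only [intervalIntegral.integral_div]
    rw [log_beta_integral hα0 hγ hu0 ht]
    congr 1
    have hc : ((k : ℝ) + 1) * α + β = α + γ := by rw [hγdef]; ring
    push_cast
    rw [hc]
    field_simp
end

section
/- Let A0, A1 be n×n real matrices with A0 A1 = A1 A0, let h > 1, s ≥ 1, and let s h^k < t ≤ s h^{k+1} for an integer k ≥ 0. Then, for α = β = 1, the delayed Mittag-Leffler type function with logarithm is given by Y_{h,1,1}^{A0,A1}(t,s) = ∑_{j=0}^k exp(A0 (ln t - ln(s h^j))) A1^j (ln t - ln(s h^j))^j / j!, where exp denotes the matrix exponential. -/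
open Real MeasureTheory intervalIntegral Filter

attribute [local instance] Matrix.linftyOpNormedAddCommGroup Matrix.linftyOpNormedRing
  Matrix.linftyOpNormedAlgebra

lemma mlE_one_one {n : ℕ} (A : Matrix (Fin n) (Fin n) ℝ) (z : ℝ) :
    mlE A 1 1 z = NormedSpace.exp (z • A) := by
  rw [NormedSpace.exp_eq_tsum ℝ, mlE]
  refine tsum_congr fun k => ?_
  have h1 : ((k : ℝ) * 1 + 1) = ((k : ℝ) + 1) := by ring
  rw [one_mul, Real.rpow_natCast, h1, Real.Gamma_nat_eq_factorial, smul_pow, smul_smul]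
  congr 1
  field_simp

lemma Ymat_one {n : ℕ} (A0 A1 : Matrix (Fin n) (Fin n) ℝ) (h : ℝ) (hh : 0 < h)
    (hcomm : A0 * A1 = A1 * A0) :
    ∀ (j : ℕ) (t u : ℝ), 0 < u → u ≤ t →
      Ymat A0 A1 h 1 1 j t u
        = ((Real.log (t / u)) ^ j / (j.factorial : ℝ)) •
            (NormedSpace.exp (Real.log (t / u) • A0) * A1 ^ j) := by
  intro j
  induction j with
  | zero =>
      intro t u _ _
      simp [Ymat, mlE_one_one]
  | succ j ih =>
      intro t u hu hut
      rcases eq_or_lt_of_le hut with rfl | hut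
      · simp [Ymat, Real.log_div (ne_of_gt hu) (ne_of_gt hu)]
      have ht : (0:ℝ) < t := lt_trans hu hut
      have hEcomm : ∀ a : ℝ, NormedSpace.exp (a • A0) * A1 = A1 * NormedSpace.exp (a • A0) := by
        intro a
        exact ((Commute.smul_left (hcomm : Commute A0 A1) a).exp_left).eq
      -- rewrite the integrand on [u, t]
      have hint : Ymat A0 A1 h 1 1 (j+1) t u
          = ∫ r in u..t, (r⁻¹ * ((Real.log r - Real.log u) ^ j / (j.factorial : ℝ))) •
              (NormedSpace.exp (Real.log (t / u) • A0) * A1 ^ (j+1)) := by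
        show (∫ r in u..t, _) = _
        refine intervalIntegral.integral_congr fun r hr => ?_
        rw [Set.uIcc_of_le hut.le] at hr
        have hr0 : 0 < r := lt_of_lt_of_le hu hr.1
        have hdiv : r / h / (u / h) = r / u := by
          field_simp
        rw [ih (r / h) (u / h) (by positivity) (by gcongr; exact hr.1)]
        rw [hdiv]
        have hlog1 : Real.log (t / r) = Real.log t - Real.log r :=
          Real.log_div (ne_of_gt ht) (ne_of_gt hr0)
        have hlog2 : Real.log (r / u) = Real.log r - Real.log u :=
          Real.log_div (ne_of_gt hr0) (ne_of_gt hu)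
        have hlog3 : Real.log (t / u) = Real.log t - Real.log u :=
          Real.log_div (ne_of_gt ht) (ne_of_gt hu)
        have hexp : NormedSpace.exp (Real.log (t / r) • A0) *
            NormedSpace.exp (Real.log (r / u) • A0)
            = NormedSpace.exp (Real.log (t / u) • A0) := by
          have hadd : Real.log (t / r) + Real.log (r / u) = Real.log (t / u) := by
            rw [hlog1, hlog2, hlog3]; ring
          rw [← hadd, add_smul]
          exact (NormedSpace.exp_add_of_commute
            (((Commute.refl A0).smul_left (Real.log (t / r))).smul_right (Real.log (r / u)))).symm
        rw [sub_self, Real.rpow_zero, one_smul, mlE_one_one]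
        rw [mul_smul_comm, mul_smul_comm, smul_smul]
        congr 1
        · rw [hlog2]
        · rw [← hexp, pow_succ', ← mul_assoc (A1 : Matrix (Fin n) (Fin n) ℝ),
            ← hEcomm, mul_assoc]
          exact (mul_assoc _ _ _).symm
      rw [hint, intervalIntegral.integral_smul_const]
      congr 1
      -- scalar integral
      have hderiv : ∀ r ∈ Set.uIcc u t,
          HasDerivAt (fun x => (Real.log x - Real.log u) ^ (j+1) / (j+1))
            (r⁻¹ * ((Real.log r - Real.log u) ^ j)) r := by
        intro r hr
        rw [Set.uIcc_of_le hut.le] at hr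
        have hr0 : 0 < r := lt_of_lt_of_le hu hr.1
        have h1 : HasDerivAt (fun x => Real.log x - Real.log u) r⁻¹ r :=
          (Real.hasDerivAt_log (ne_of_gt hr0)).sub_const _
        have h2 := (h1.fun_pow (j+1)).div_const ((j:ℝ)+1)
        refine h2.congr_deriv ?_
        have : ((j:ℝ)+1) ≠ 0 := by positivity
        push_cast
        rw [div_eq_iff this]
        ring
      have hcont : IntervalIntegrable
          (fun r => r⁻¹ * ((Real.log r - Real.log u) ^ j)) MeasureTheory.volume u t := by
        apply ContinuousOn.intervalIntegrable
        apply ContinuousOn.mul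
        · exact continuousOn_inv₀.mono (by
            intro r hr
            rw [Set.uIcc_of_le hut.le] at hr
            exact ne_of_gt (lt_of_lt_of_le hu hr.1))
        · apply ContinuousOn.pow
          apply ContinuousOn.sub _ continuousOn_const
          exact Real.continuousOn_log.mono (by
            intro r hr
            rw [Set.uIcc_of_le hut.le] at hr
            exact ne_of_gt (lt_of_lt_of_le hu hr.1))
      have hFTC := intervalIntegral.integral_eq_sub_of_hasDerivAt hderiv hcont
      have heq : (fun r => r⁻¹ * ((Real.log r - Real.log u) ^ j / (j.factorial : ℝ)))
          = fun r => (r⁻¹ * ((Real.log r - Real.log u) ^ j)) * (j.factorial : ℝ)⁻¹ := by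
        funext r; ring
      rw [heq, intervalIntegral.integral_mul_const, hFTC]
      rw [Real.log_div (ne_of_gt ht) (ne_of_gt hu), sub_self, zero_pow (Nat.succ_ne_zero j)]
      have hfj : (j.factorial : ℝ) ≠ 0 := Nat.cast_ne_zero.mpr j.factorial_ne_zero
      have hfj1 : ((j+1).factorial : ℝ) = ((j:ℝ)+1) * (j.factorial : ℝ) := by
        rw [Nat.factorial_succ]; push_cast; ring
      rw [hfj1]
      field_simp
      ring

/-- **Lemma 4 (iii): the case `α = β = 1` with permutable matrices.** If `A0 A1 = A1 A0`,
`h > 1`, `s ≥ 1` and `s h^k < t ≤ s h^{k+1}` for an integer `k ≥ 0`, then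
`Y_{h,1,1}^{A0,A1}(t,s) = ∑_{j=0}^k exp(A0 (ln t - ln(s h^j))) A1^j (ln t - ln(s h^j))^j/j!`. -/
theorem Ydel_eq_of_order_one (n : ℕ) (A0 A1 : Matrix (Fin n) (Fin n) ℝ) (h s t : ℝ) (k : ℕ)
    (hcomm : A0 * A1 = A1 * A0) (hh : 1 < h) (hs : 1 ≤ s)
    (ht1 : s * h ^ k < t) (ht2 : t ≤ s * h ^ (k + 1)) :
    Ydel A0 A1 h 1 1 t s
      = ∑ j ∈ Finset.range (k + 1),
          NormedSpace.exp ((Real.log t - Real.log (s * h ^ j)) • A0) *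
            (((Real.log t - Real.log (s * h ^ j)) ^ j / (j.factorial : ℝ)) • A1 ^ j) := by
  have h0 : (0:ℝ) < h := lt_trans one_pos hh
  have hs0 : (0:ℝ) < s := lt_of_lt_of_le one_pos hs
  have hhk : (1:ℝ) ≤ h ^ k := one_le_pow₀ hh.le
  have hts : s < t := lt_of_le_of_lt (le_mul_of_one_le_right hs0.le hhk) ht1
  have ht0 : (0:ℝ) < t := lt_trans hs0 hts
  have hlh : 0 < Real.log h := Real.log_pos hh
  unfold Ydel
  rw [if_neg (not_lt.mpr hts.le), if_neg (ne_of_gt hts)]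
  have hceil : ⌈Real.log (t / s) / Real.log h⌉₊ = k + 1 := by
    rw [Nat.ceil_eq_iff (Nat.succ_ne_zero k)]
    constructor
    · rw [lt_div_iff₀ hlh]
      have h1 : Real.log (s * h ^ k) < Real.log t := Real.log_lt_log (by positivity) ht1
      rw [Real.log_mul (ne_of_gt hs0) (by positivity), Real.log_pow] at h1
      rw [Real.log_div (ne_of_gt ht0) (ne_of_gt hs0)]
      push_cast
      linarith
    · rw [div_le_iff₀ hlh]
      have h1 : Real.log t ≤ Real.log (s * h ^ (k+1)) :=
        Real.log_le_log ht0 ht2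
      rw [Real.log_mul (ne_of_gt hs0) (by positivity), Real.log_pow] at h1
      rw [Real.log_div (ne_of_gt ht0) (ne_of_gt hs0)]
      have hls : 0 ≤ Real.log s := Real.log_nonneg hs
      push_cast at h1 ⊢
      linarith
  rw [hceil]
  refine Finset.sum_congr rfl fun j hj => ?_
  have hj' : j ≤ k := Nat.lt_succ_iff.mp (Finset.mem_range.mp hj)
  have hu : 0 < s * h ^ j := by positivity
  have hut : s * h ^ j ≤ t := by
    refine le_of_lt (lt_of_le_of_lt ?_ ht1)
    have : h ^ j ≤ h ^ k := pow_le_pow_right₀ hh.le hj'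
    nlinarith
  rw [Ymat_one A0 A1 h h0 hcomm j t (s * h ^ j) hu hut,
    Real.log_div (ne_of_gt ht0) (ne_of_gt hu)]
  exact (mul_smul_comm _ _ _).symm
end
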